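/- With φ_T as defined, for every natural number n ≥ 1: if there is a prime strictly between n² and (n+1)², then φ_T(n², 2n, n) ≤ π(2n) - π(n). Consequently, Legendre's conjecture holds for all n if and only if φ_T(n², 2n, n) ≤ π(2n) - π(n) for all n. -/

import Mathlib

open ArithmeticFunction Nat Finset

/-- Index set: squarefree `d > 1` all of whose prime factors are `≤ n`. -/
def sqfSet (n : ℕ) : Finset ℕ :=
  (Finset.range (primorial n + 1)).filter
    (fun d => 1 < d ∧ Squarefree d ∧ ∀ p ∈ d.primeFactors, p ≤ n)

/-- The transformed Legendre function `φ_T`. -/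
def phiT (M₁ M₂ n : ℕ) : ℤ :=
  -∑ d ∈ sqfSet n, ArithmeticFunction.moebius d * (((M₁ % d + M₂ % d) / d : ℕ) : ℤ)

open scoped ArithmeticFunction.Moebius ArithmeticFunction.zeta

/-! ### Auxiliary lemmas -/

lemma aux_squarefree_prod_primes {s : Finset ℕ} (hs : ∀ p ∈ s, p.Prime) :
    Squarefree (∏ p ∈ s, p) := by
  classical
  induction s using Finset.induction_on with
  | empty => simpa using squarefree_one
  | @insert a s ha ih =>
    rw [Finset.prod_insert ha, Nat.squarefree_mul_iff]
    have hap : a.Prime := hs a (Finset.mem_insert_self a s)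
    refine ⟨?_, hap.prime.squarefree, ih fun p hp => hs p (Finset.mem_insert_of_mem hp)⟩
    rw [hap.coprime_iff_not_dvd]
    intro hdvd
    obtain ⟨q, hq, hdq⟩ := hap.prime.exists_mem_finset_dvd hdvd
    have hqp : q.Prime := hs q (Finset.mem_insert_of_mem hq)
    have : a = q := (Nat.prime_dvd_prime_iff_eq hap hqp).mp hdq
    exact ha (this ▸ hq)

lemma aux_squarefree_primorial (n : ℕ) : Squarefree (primorial n) :=
  aux_squarefree_prod_primes fun p hp => (Finset.mem_filter.mp hp).2

lemma aux_prime_dvd_primorial {p n : ℕ} (hp : p.Prime) (hpn : p ≤ n) :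
    p ∣ primorial n :=
  Finset.dvd_prod_of_mem _ (by
    simp only [Finset.mem_filter, Finset.mem_range]
    exact ⟨by omega, hp⟩)

lemma aux_dvd_primorial_iff {d n : ℕ} :
    d ∣ primorial n ↔ d ≠ 0 ∧ Squarefree d ∧ ∀ p ∈ d.primeFactors, p ≤ n := by
  constructor
  · intro hd
    have hP := aux_squarefree_primorial n
    have hd0 : d ≠ 0 := by
      rintro rfl
      exact absurd (Nat.eq_zero_of_zero_dvd hd) (primorial_pos n).ne'
    refine ⟨hd0, hP.squarefree_of_dvd hd, fun p hp => ?_⟩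
    have hpp : p.Prime := Nat.prime_of_mem_primeFactors hp
    have hpd : p ∣ primorial n := (Nat.dvd_of_mem_primeFactors hp).trans hd
    obtain ⟨q, hq, hdq⟩ := hpp.prime.exists_mem_finset_dvd hpd
    simp only [Finset.mem_filter, Finset.mem_range] at hq
    have : p = q := (Nat.prime_dvd_prime_iff_eq hpp hq.2).mp hdq
    omega
  · rintro ⟨hd0, hsq, hle⟩
    have : d = ∏ p ∈ d.primeFactors, p := (Nat.prod_primeFactors_of_squarefree hsq).symm
    rw [this]
    apply Finset.prod_dvd_prod_of_subset
    intro p hp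
    simp only [Finset.mem_filter, Finset.mem_range]
    exact ⟨by have := hle p hp; omega, Nat.prime_of_mem_primeFactors hp⟩

lemma aux_sqfSet_eq (n : ℕ) :
    sqfSet n = (primorial n).divisors.erase 1 := by
  ext d
  simp only [sqfSet, Finset.mem_filter, Finset.mem_range, Finset.mem_erase,
    Nat.mem_divisors]
  constructor
  · rintro ⟨-, h1, hsq, hle⟩
    refine ⟨by omega, aux_dvd_primorial_iff.mpr ⟨by omega, hsq, hle⟩, (primorial_pos n).ne'⟩
  · rintro ⟨h1, hd, -⟩
    obtain ⟨hd0, hsq, hle⟩ := aux_dvd_primorial_iff.mp hd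
    have hdle : d ≤ primorial n := Nat.le_of_dvd (primorial_pos n) hd
    exact ⟨by omega, by omega, hsq, hle⟩

/-- Legendre's formula. -/
lemma aux_legendre (n x : ℕ) :
    ((#(Finset.Ioc 0 x |>.filter (fun m => Nat.Coprime m (primorial n))) : ℤ)) =
      ∑ d ∈ (primorial n).divisors, μ d * ((x / d : ℕ) : ℤ) := by
  classical
  set P := primorial n with hPdef
  have hP0 : P ≠ 0 := (primorial_pos n).ne'
  have step1 : ((#(Finset.Ioc 0 x |>.filter (fun m => Nat.Coprime m P)) : ℤ)) =
      ∑ m ∈ Finset.Ioc 0 x, (if Nat.Coprime m P then (1 : ℤ) else 0) := by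
    rw [Finset.card_filter]
    push_cast
    exact Finset.sum_congr rfl fun m _ => by split <;> simp
  rw [step1]
  have key : ∀ m ∈ Finset.Ioc 0 x,
      (if Nat.Coprime m P then (1 : ℤ) else 0) =
        ∑ d ∈ P.divisors, (if d ∣ m then (μ d : ℤ) else 0) := by
    intro m hm
    have hm0 : 0 < m := (Finset.mem_Ioc.mp hm).1
    have hg0 : Nat.gcd m P ≠ 0 := fun h => hm0.ne' (Nat.eq_zero_of_gcd_eq_zero_left h)
    have hfilter : P.divisors.filter (fun d => d ∣ m) = (Nat.gcd m P).divisors := by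
      ext d
      simp only [Finset.mem_filter, Nat.mem_divisors, Nat.dvd_gcd_iff]
      constructor
      · rintro ⟨⟨h1, -⟩, h2⟩; exact ⟨⟨h2, h1⟩, hg0⟩
      · rintro ⟨⟨h1, h2⟩, -⟩; exact ⟨⟨h2, hP0⟩, h1⟩
    have : ∑ d ∈ P.divisors, (if d ∣ m then (μ d : ℤ) else 0) =
        ∑ d ∈ (Nat.gcd m P).divisors, (μ d : ℤ) := by
      rw [← hfilter, Finset.sum_filter]
    rw [this]
    have hsum : ∑ d ∈ (Nat.gcd m P).divisors, (μ d : ℤ) =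
        (μ * (ζ : ArithmeticFunction ℤ)) (Nat.gcd m P) :=
      (ArithmeticFunction.coe_mul_zeta_apply).symm
    rw [hsum, ArithmeticFunction.moebius_mul_coe_zeta, ArithmeticFunction.one_apply]
  rw [Finset.sum_congr rfl key, Finset.sum_comm]
  apply Finset.sum_congr rfl
  intro d _
  rw [← Finset.sum_filter]
  rw [Finset.sum_const, Nat.Ioc_filter_dvd_card_eq_div]
  simp [mul_comm]

/-- The key div identity. -/
lemma aux_div_identity {a b d : ℕ} (hd : 0 < d) :
    ((a + b) / d : ℕ) = a / d + b / d + (a % d + b % d) / d := by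
  rw [Nat.add_div hd]
  congr 1
  have h1 : a % d < d := Nat.mod_lt _ hd
  have h2 : b % d < d := Nat.mod_lt _ hd
  rcases le_or_gt d (a % d + b % d) with h | h
  · have hlt : a % d + b % d < 2 * d := by omega
    have hge : 1 ≤ (a % d + b % d) / d := (Nat.one_le_div_iff hd).mpr h
    have hlt2 : (a % d + b % d) / d < 2 := Nat.div_lt_of_lt_mul (by omega)
    simp only [if_pos h]
    omega
  · rw [Nat.div_eq_of_lt h, if_neg (by omega)]

/-- `phiT` in terms of the Legendre counting function. -/
lemma aux_phiT_eq (M₁ M₂ n : ℕ) :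
    phiT M₁ M₂ n =
      ((#(Finset.Ioc 0 M₁ |>.filter (fun m => Nat.Coprime m (primorial n))) : ℤ)) +
      ((#(Finset.Ioc 0 M₂ |>.filter (fun m => Nat.Coprime m (primorial n))) : ℤ)) -
      ((#(Finset.Ioc 0 (M₁ + M₂) |>.filter (fun m => Nat.Coprime m (primorial n))) : ℤ)) := by
  classical
  rw [aux_legendre, aux_legendre, aux_legendre]
  rw [phiT, aux_sqfSet_eq]
  rw [Finset.sum_erase _ (by simp)]
  have key : ∀ d ∈ (primorial n).divisors,
      (μ d : ℤ) * (((M₁ % d + M₂ % d) / d : ℕ) : ℤ) =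
        μ d * (((M₁ + M₂) / d : ℕ) : ℤ) - μ d * ((M₁ / d : ℕ) : ℤ)
          - μ d * ((M₂ / d : ℕ) : ℤ) := by
    intro d hd
    have hd0 : 0 < d := Nat.pos_of_mem_divisors hd
    have hcast : (((M₁ + M₂) / d : ℕ) : ℤ) =
        ((M₁ / d : ℕ) : ℤ) + ((M₂ / d : ℕ) : ℤ) + (((M₁ % d + M₂ % d) / d : ℕ) : ℤ) := by
      rw [aux_div_identity hd0]; push_cast; ring
    linear_combination (-(μ d : ℤ)) * hcast
  rw [Finset.sum_congr rfl key, Finset.sum_sub_distrib, Finset.sum_sub_distrib]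
  ring

lemma aux_coprime_of_prime_gt {p n : ℕ} (hp : p.Prime) (hn : n < p) :
    Nat.Coprime p (primorial n) := by
  rw [hp.coprime_iff_not_dvd]
  intro h
  obtain ⟨q, hq, hdq⟩ := hp.prime.exists_mem_finset_dvd h
  simp only [Finset.mem_filter, Finset.mem_range] at hq
  have : p = q := (Nat.prime_dvd_prime_iff_eq hp hq.2).mp hdq
  omega

lemma aux_prime_of_coprime {m n : ℕ} (hn : 1 ≤ n) (hm1 : 1 < m) (hm2 : m ≤ n ^ 2 + 2 * n)
    (h : Nat.Coprime m (primorial n)) : m.Prime := by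
  by_contra hnp
  have hmf : m.minFac.Prime := Nat.minFac_prime (by omega)
  have hmfd : m.minFac ∣ m := Nat.minFac_dvd m
  have hgt : n < m.minFac := by
    by_contra hle
    push_neg at hle
    have h1 : m.minFac ∣ primorial n := aux_prime_dvd_primorial hmf hle
    have h2 : m.minFac ∣ Nat.gcd m (primorial n) := Nat.dvd_gcd hmfd h1
    rw [h] at h2
    exact hmf.one_lt.ne' (Nat.eq_one_of_dvd_one h2)
  have hsq : m.minFac ^ 2 ≤ m := Nat.minFac_sq_le_self (by omega) hnp
  have hsq2 : (n + 1) ^ 2 ≤ m.minFac ^ 2 := Nat.pow_le_pow_left (by omega) 2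
  have : (n + 1) ^ 2 ≤ n ^ 2 + 2 * n := le_trans hsq2 (le_trans hsq hm2)
  nlinarith

lemma aux_prime_gt_of_coprime {m n : ℕ} (hm : m.Prime)
    (h : Nat.Coprime m (primorial n)) : n < m := by
  by_contra hle
  push_neg at hle
  have h1 : m ∣ primorial n := aux_prime_dvd_primorial hm hle
  have h2 : m ∣ Nat.gcd m (primorial n) := Nat.dvd_gcd dvd_rfl h1
  rw [h] at h2
  exact hm.one_lt.ne' (Nat.eq_one_of_dvd_one h2)

/-- Counting coprimes up to `2n`. -/
lemma aux_count_2n {n : ℕ} (hn : 1 ≤ n) :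
    #(Finset.Ioc 0 (2 * n) |>.filter (fun m => Nat.Coprime m (primorial n))) =
      1 + #(Finset.Ioc n (2 * n) |>.filter Nat.Prime) := by
  classical
  have hset : (Finset.Ioc 0 (2 * n) |>.filter (fun m => Nat.Coprime m (primorial n))) =
      insert 1 (Finset.Ioc n (2 * n) |>.filter Nat.Prime) := by
    ext m
    simp only [Finset.mem_filter, Finset.mem_Ioc, Finset.mem_insert]
    constructor
    · rintro ⟨⟨h0, h2n⟩, hcop⟩
      rcases eq_or_lt_of_le (Nat.one_le_iff_ne_zero.mpr (by omega) : 1 ≤ m) with h1 | h1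
      · exact Or.inl h1.symm
      · right
        have hmp : m.Prime := aux_prime_of_coprime hn h1 (by nlinarith) hcop
        exact ⟨⟨aux_prime_gt_of_coprime hmp hcop, h2n⟩, hmp⟩
    · rintro (rfl | ⟨⟨hgt, hle⟩, hp⟩)
      · exact ⟨⟨by omega, by omega⟩, Nat.coprime_one_left _⟩
      · exact ⟨⟨by have := hp.two_le; omega, hle⟩, aux_coprime_of_prime_gt hp hgt⟩
  rw [hset, Finset.card_insert_of_notMem (by simp [Nat.not_prime_one])]
  omega

/-- Counting coprimes up to `n² + 2n`. -/
lemma aux_count_split {n : ℕ} (hn : 1 ≤ n) :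
    #(Finset.Ioc 0 (n ^ 2 + 2 * n) |>.filter (fun m => Nat.Coprime m (primorial n))) =
      #(Finset.Ioc 0 (n ^ 2) |>.filter (fun m => Nat.Coprime m (primorial n))) +
      #(Finset.Ioc (n ^ 2) (n ^ 2 + 2 * n) |>.filter Nat.Prime) := by
  classical
  have hunion : Finset.Ioc 0 (n ^ 2 + 2 * n) =
      Finset.Ioc 0 (n ^ 2) ∪ Finset.Ioc (n ^ 2) (n ^ 2 + 2 * n) :=
    (Finset.Ioc_union_Ioc_eq_Ioc (by omega) (by omega)).symm
  rw [hunion, Finset.filter_union, Finset.card_union_of_disjoint]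
  · congr 1
    apply Finset.card_bij (fun m _ => m)
    · intro m hm
      simp only [Finset.mem_filter, Finset.mem_Ioc] at hm ⊢
      have h1 : 1 < m := by nlinarith [hm.1.1]
      exact ⟨hm.1, aux_prime_of_coprime hn h1 hm.1.2 hm.2⟩
    · intro a _ b _ h; exact h
    · intro m hm
      simp only [Finset.mem_filter, Finset.mem_Ioc] at hm
      refine ⟨m, ?_, rfl⟩
      simp only [Finset.mem_filter, Finset.mem_Ioc]
      have hgt : n < m := by nlinarith [hm.1.1]
      exact ⟨hm.1, aux_coprime_of_prime_gt hm.2 hgt⟩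
  · apply Finset.disjoint_filter_filter
    rw [Finset.disjoint_left]
    intro a ha hb
    simp only [Finset.mem_Ioc] at ha hb
    omega

/-- π difference as a cardinality. -/
lemma aux_pi_diff {a b : ℕ} (hab : a ≤ b) :
    Nat.primeCounting b = Nat.primeCounting a + #(Finset.Ioc a b |>.filter Nat.Prime) := by
  classical
  show Nat.primeCounting' (b + 1) = Nat.primeCounting' (a + 1) + _
  unfold Nat.primeCounting'
  rw [Nat.count_eq_card_filter_range, Nat.count_eq_card_filter_range]
  have : Finset.range (b + 1) = Finset.range (a + 1) ∪ Finset.Ioc a b := by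
    simp only [Finset.range_eq_Ico, ← Finset.Ico_add_one_add_one_eq_Ioc]
    exact (Finset.Ico_union_Ico_eq_Ico (by omega) (by omega)).symm
  rw [this, Finset.filter_union, Finset.card_union_of_disjoint]
  apply Finset.disjoint_filter_filter
  rw [Finset.disjoint_left]
  intro x hx hy
  simp only [Finset.mem_range] at hx
  simp only [Finset.mem_Ioc] at hy
  omega

/-- The main identity. -/
lemma aux_main {n : ℕ} (hn : 1 ≤ n) :
    phiT (n ^ 2) (2 * n) n =
      1 + (Nat.primeCounting (2 * n) : ℤ) - Nat.primeCounting n -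
        #(Finset.Ioc (n ^ 2) (n ^ 2 + 2 * n) |>.filter Nat.Prime) := by
  rw [aux_phiT_eq, aux_count_2n hn, aux_count_split hn,
    aux_pi_diff (show n ≤ 2 * n by omega)]
  push_cast
  ring

lemma aux_exists_iff {n : ℕ} (hn : 1 ≤ n) :
    (∃ p, Nat.Prime p ∧ n ^ 2 < p ∧ p < (n + 1) ^ 2) ↔
      1 ≤ #(Finset.Ioc (n ^ 2) (n ^ 2 + 2 * n) |>.filter Nat.Prime) := by
  constructor
  · rintro ⟨p, hp, h1, h2⟩
    refine Finset.card_pos.mpr ⟨p, ?_⟩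
    simp only [Finset.mem_filter, Finset.mem_Ioc]
    exact ⟨⟨h1, by nlinarith⟩, hp⟩
  · intro h
    obtain ⟨p, hp⟩ := Finset.card_pos.mp h
    simp only [Finset.mem_filter, Finset.mem_Ioc] at hp
    exact ⟨p, hp.2, hp.1.1, by nlinarith [hp.1.2]⟩

theorem stmt_5 :
    (∀ n : ℕ, 1 ≤ n → (∃ p, Nat.Prime p ∧ n ^ 2 < p ∧ p < (n + 1) ^ 2) →
      phiT (n ^ 2) (2 * n) n ≤ (Nat.primeCounting (2 * n) : ℤ) - Nat.primeCounting n) ∧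
    ((∀ n : ℕ, 1 ≤ n → ∃ p, Nat.Prime p ∧ n ^ 2 < p ∧ p < (n + 1) ^ 2) ↔
      (∀ n : ℕ, 1 ≤ n →
        phiT (n ^ 2) (2 * n) n ≤ (Nat.primeCounting (2 * n) : ℤ) - Nat.primeCounting n)) := by
  have fwd : ∀ n : ℕ, 1 ≤ n → (∃ p, Nat.Prime p ∧ n ^ 2 < p ∧ p < (n + 1) ^ 2) →
      phiT (n ^ 2) (2 * n) n ≤ (Nat.primeCounting (2 * n) : ℤ) - Nat.primeCounting n := by
    intro n hn hex
    rw [aux_main hn]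
    have h1 := (aux_exists_iff hn).mp hex
    have : (1 : ℤ) ≤ #(Finset.Ioc (n ^ 2) (n ^ 2 + 2 * n) |>.filter Nat.Prime) := by
      exact_mod_cast h1
    linarith
  refine ⟨fwd, ⟨fun h n hn => fwd n hn (h n hn), fun h n hn => ?_⟩⟩
  have hineq := h n hn
  rw [aux_main hn] at hineq
  rw [aux_exists_iff hn]
  have : (1 : ℤ) ≤ #(Finset.Ioc (n ^ 2) (n ^ 2 + 2 * n) |>.filter Nat.Prime) := by
    linarith
  exact_mod_cast this
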